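/- In the self-consistent (Kaplan–Meier) estimator setup with data e_1, …, e_n and indicators δ_1, …, δ_n ∈ {0,1} satisfying δ_i = 1 whenever e_i = max_j e_j, and for any continuous a : [0,1] → ℝ with A(u) = ∫_0^u a(s) ds, the general-score imputed ranks sum to n·(A(1) − A(0)); that is, ∑_{i=1}^n [ δ_i·(A(F̂(e_i)) − A(F̂(e_i⁻)))/(F̂(e_i) − F̂(e_i⁻)) + (1 − δ_i)·(A(1) − A(F̂(e_i)))/(1 − F̂(e_i)) ] = n·(A(1) − A(0)). -/

import Mathlib

open Finset
open scoped Classical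

/-- Number at risk at `v`: `Y(v) = #{j : e_j ≥ v}` (as a real number). -/
noncomputable def kmY {n : ℕ} (e : Fin n → ℝ) (v : ℝ) : ℝ :=
  ((Finset.univ.filter fun j => v ≤ e j).card : ℝ)

/-- Number of (uncensored) events at `v`: `d(v) = #{i : e_i = v ∧ δ_i = 1}`. -/
noncomputable def kmD {n : ℕ} (e : Fin n → ℝ) (δ : Fin n → ℝ) (v : ℝ) : ℝ :=
  ((Finset.univ.filter fun i => e i = v ∧ δ i = 1).card : ℝ)

/-- Self-consistent (Kaplan–Meier) estimator:
`F̂(t) = 1 − ∏_{v ∈ V, v ≤ t} (1 − d(v)/Y(v))`, `V` the set of distinct data values. -/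
noncomputable def kmF {n : ℕ} (e : Fin n → ℝ) (δ : Fin n → ℝ) (t : ℝ) : ℝ :=
  1 - ∏ v ∈ (Finset.univ.image e).filter (fun v => v ≤ t), (1 - kmD e δ v / kmY e v)

/-- Left limit of the self-consistent estimator:
`F̂(t⁻) = 1 − ∏_{v ∈ V, v < t} (1 − d(v)/Y(v))`. -/
noncomputable def kmFminus {n : ℕ} (e : Fin n → ℝ) (δ : Fin n → ℝ) (t : ℝ) : ℝ :=
  1 - ∏ v ∈ (Finset.univ.image e).filter (fun v => v < t), (1 - kmD e δ v / kmY e v)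

noncomputable def kmW {n : ℕ} (e : Fin n → ℝ) (k : ℕ) : ℝ :=
  if h : k < (Finset.univ.image e).card then
    (Finset.univ.image e).orderEmbOfFin rfl ⟨k, h⟩ else 0
noncomputable def kmS {n : ℕ} (e : Fin n → ℝ) (δ : Fin n → ℝ) (k : ℕ) : ℝ :=
  ∏ j ∈ Finset.range k, (1 - kmD e δ (kmW e j) / kmY e (kmW e j))
noncomputable def kmM {n : ℕ} (e : Fin n → ℝ) (k : ℕ) : ℝ :=
  ((Finset.univ.filter fun i => e i = kmW e k).card : ℝ)
noncomputable def kmN {n : ℕ} (e : Fin n → ℝ) (k : ℕ) : ℝ :=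
  ((Finset.univ.filter fun i =>
      ∃ l, k ≤ l ∧ l < (Finset.univ.image e).card ∧ e i = kmW e l).card : ℝ)
lemma kmW_mem {n : ℕ} (e : Fin n → ℝ) {k : ℕ} (hk : k < (Finset.univ.image e).card) :
    kmW e k ∈ Finset.univ.image e := by
  rw [kmW, dif_pos hk]; exact Finset.orderEmbOfFin_mem _ rfl _
lemma kmW_le_iff {n : ℕ} (e : Fin n → ℝ) {j k : ℕ} (hj : j < (Finset.univ.image e).card)
    (hk : k < (Finset.univ.image e).card) : kmW e j ≤ kmW e k ↔ j ≤ k := by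
  rw [kmW, dif_pos hj, kmW, dif_pos hk, OrderEmbedding.le_iff_le]; exact Fin.mk_le_mk
lemma kmW_inj {n : ℕ} (e : Fin n → ℝ) {j k : ℕ} (hj : j < (Finset.univ.image e).card)
    (hk : k < (Finset.univ.image e).card) (h : kmW e j = kmW e k) : j = k :=
  le_antisymm ((kmW_le_iff e hj hk).mp h.le) ((kmW_le_iff e hk hj).mp h.ge)
lemma kmW_surj {n : ℕ} (e : Fin n → ℝ) {u : ℝ} (hu : u ∈ Finset.univ.image e) :
    ∃ k, ∃ _ : k < (Finset.univ.image e).card, kmW e k = u := by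
  have h2 : u ∈ Set.range ((Finset.univ.image e).orderEmbOfFin rfl) := by
    rw [Finset.range_orderEmbOfFin]; exact_mod_cast hu
  obtain ⟨j, hj⟩ := h2
  exact ⟨j.1, j.2, by rw [kmW, dif_pos j.2, Fin.eta]; exact hj⟩

-- NEW PART
lemma kmFilter_le {n : ℕ} (e : Fin n → ℝ) {k : ℕ} (hk : k < (Finset.univ.image e).card) :
    (Finset.univ.image e).filter (fun u => u ≤ kmW e k)
      = (Finset.range (k+1)).image (kmW e) := by
  ext u
  constructor
  · intro h
    obtain ⟨hu, hle⟩ := Finset.mem_filter.mp h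
    obtain ⟨j, hj, rfl⟩ := kmW_surj e hu
    exact Finset.mem_image.mpr ⟨j, Finset.mem_range.mpr
      (Nat.lt_succ_of_le ((kmW_le_iff e hj hk).mp hle)), rfl⟩
  · intro h
    obtain ⟨j, hj, rfl⟩ := Finset.mem_image.mp h
    have hjk : j ≤ k := Nat.lt_succ_iff.mp (Finset.mem_range.mp hj)
    have hjm : j < (Finset.univ.image e).card := lt_of_le_of_lt hjk hk
    exact Finset.mem_filter.mpr ⟨kmW_mem e hjm, (kmW_le_iff e hjm hk).mpr hjk⟩

lemma kmFilter_lt {n : ℕ} (e : Fin n → ℝ) {k : ℕ} (hk : k < (Finset.univ.image e).card) :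
    (Finset.univ.image e).filter (fun u => u < kmW e k)
      = (Finset.range k).image (kmW e) := by
  ext u
  constructor
  · intro h
    obtain ⟨hu, hlt⟩ := Finset.mem_filter.mp h
    obtain ⟨j, hj, rfl⟩ := kmW_surj e hu
    refine Finset.mem_image.mpr ⟨j, Finset.mem_range.mpr ?_, rfl⟩
    by_contra hjk
    exact absurd ((kmW_le_iff e hk hj).mpr (not_lt.mp hjk)) (not_le.mpr hlt)
  · intro h
    obtain ⟨j, hj0, rfl⟩ := Finset.mem_image.mp h
    have hj : j < k := Finset.mem_range.mp hj0
    have hjm : j < (Finset.univ.image e).card := lt_trans hj hk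
    refine Finset.mem_filter.mpr ⟨kmW_mem e hjm, ?_⟩
    exact lt_of_le_of_ne ((kmW_le_iff e hjm hk).mpr hj.le)
      (fun h => absurd (kmW_inj e hjm hk h) (Nat.ne_of_lt hj))

lemma kmF_eq {n : ℕ} (e : Fin n → ℝ) (δ : Fin n → ℝ) {k : ℕ}
    (hk : k < (Finset.univ.image e).card) :
    kmF e δ (kmW e k) = 1 - kmS e δ (k+1) := by
  rw [kmF, kmFilter_le e hk, Finset.prod_image, kmS]
  intro x hx y hy h
  simp only [Finset.coe_range, Set.mem_Iio, Finset.mem_coe, Finset.mem_range] at hx hy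
  exact kmW_inj e (lt_of_lt_of_le hx hk) (lt_of_lt_of_le hy hk) h

lemma kmFminus_eq {n : ℕ} (e : Fin n → ℝ) (δ : Fin n → ℝ) {k : ℕ}
    (hk : k < (Finset.univ.image e).card) :
    kmFminus e δ (kmW e k) = 1 - kmS e δ k := by
  rw [kmFminus, kmFilter_lt e hk, Finset.prod_image, kmS]
  intro x hx y hy h
  simp only [Finset.coe_range, Set.mem_Iio, Finset.mem_coe, Finset.mem_range] at hx hy
  exact kmW_inj e (lt_trans hx hk) (lt_trans hy hk) h

lemma kmN_eq_kmY {n : ℕ} (e : Fin n → ℝ) {k : ℕ} (hk : k < (Finset.univ.image e).card) :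
    kmN e k = kmY e (kmW e k) := by
  rw [kmN, kmY]
  congr 1
  congr 1
  ext i
  simp only [Finset.mem_filter, Finset.mem_univ, true_and]
  constructor
  · rintro ⟨l, hkl, hl, hel⟩; rw [hel]; exact (kmW_le_iff e hk hl).mpr hkl
  · intro h
    obtain ⟨l, hl, hw⟩ := kmW_surj e (Finset.mem_image_of_mem e (Finset.mem_univ i))
    exact ⟨l, (kmW_le_iff e hk hl).mp (by rw [hw]; exact h), hl, hw.symm⟩

lemma kmN_last {n : ℕ} (e : Fin n → ℝ) : kmN e (Finset.univ.image e).card = 0 := by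
  rw [kmN]
  have h : (Finset.univ.filter fun i : Fin n =>
      ∃ l, (Finset.univ.image e).card ≤ l ∧ l < (Finset.univ.image e).card ∧ e i = kmW e l)
      = ∅ := by
    apply Finset.filter_false_of_mem
    rintro i - ⟨l, h1, h2, -⟩
    omega
  rw [h]; simp

lemma kmN_rec {n : ℕ} (e : Fin n → ℝ) {k : ℕ} (hk : k < (Finset.univ.image e).card) :
    kmN e k = kmM e k + kmN e (k+1) := by
  rw [kmN, kmM, kmN, ← Nat.cast_add, Nat.cast_inj]
  rw [← Finset.card_union_of_disjoint, ← Finset.filter_or]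
  · congr 1
    ext i
    simp only [Finset.mem_filter, Finset.mem_univ, true_and]
    constructor
    · rintro ⟨l, h1, h2, h3⟩
      rcases eq_or_lt_of_le h1 with h | h
      · exact Or.inl (by rw [h3, ← h])
      · exact Or.inr ⟨l, h, h2, h3⟩
    · rintro (h | ⟨l, h1, h2, h3⟩)
      · exact ⟨k, le_refl _, hk, h⟩
      · exact ⟨l, by omega, h2, h3⟩
  · rw [Finset.disjoint_left]
    rintro i hi1 hi2
    simp only [Finset.mem_filter, Finset.mem_univ, true_and] at hi1 hi2
    obtain ⟨l, h1, h2, h3⟩ := hi2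
    have := kmW_inj e hk h2 (hi1 ▸ h3 : kmW e k = kmW e l)
    omega

lemma kmM_one_le {n : ℕ} (e : Fin n → ℝ) {k : ℕ} (hk : k < (Finset.univ.image e).card) :
    1 ≤ kmM e k := by
  rw [kmM]
  have h : (Finset.univ.filter fun i => e i = kmW e k).Nonempty := by
    obtain ⟨i, -, hi⟩ := Finset.mem_image.mp (kmW_mem e hk)
    exact ⟨i, Finset.mem_filter.mpr ⟨Finset.mem_univ _, hi⟩⟩
  exact_mod_cast Finset.card_pos.mpr h

lemma kmN_nonneg {n : ℕ} (e : Fin n → ℝ) (k : ℕ) : 0 ≤ kmN e k := Nat.cast_nonneg _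

lemma kmN_one_le {n : ℕ} (e : Fin n → ℝ) {k : ℕ} (hk : k < (Finset.univ.image e).card) :
    1 ≤ kmN e k := by
  have := kmN_rec e hk
  have := kmM_one_le e hk
  have := kmN_nonneg e (k+1)
  linarith

lemma kmD_le_kmM {n : ℕ} (e : Fin n → ℝ) (δ : Fin n → ℝ) (k : ℕ) :
    kmD e δ (kmW e k) ≤ kmM e k := by
  rw [kmD, kmM]
  apply Nat.cast_le.mpr
  apply Finset.card_le_card
  intro i hi
  rw [Finset.mem_filter] at hi ⊢
  exact ⟨hi.1, hi.2.1⟩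

lemma kmFactor_pos {n : ℕ} (e : Fin n → ℝ) (δ : Fin n → ℝ) {k : ℕ}
    (hk : k + 1 < (Finset.univ.image e).card) :
    0 < 1 - kmD e δ (kmW e k) / kmY e (kmW e k) := by
  have hkm : k < (Finset.univ.image e).card := by omega
  have hY : kmY e (kmW e k) = kmN e k := (kmN_eq_kmY e hkm).symm
  rw [hY]
  have h1 : 1 ≤ kmN e (k+1) := kmN_one_le e hk
  have h2 := kmN_rec e hkm
  have h3 := kmD_le_kmM e δ k
  have h4 : (0:ℝ) < kmN e k := by linarith [kmM_one_le e hkm]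
  have h5 : kmD e δ (kmW e k) < kmN e k := by linarith
  have := (div_lt_one h4).mpr h5
  linarith

lemma kmS_pos {n : ℕ} (e : Fin n → ℝ) (δ : Fin n → ℝ) {k : ℕ}
    (hk : k < (Finset.univ.image e).card) : 0 < kmS e δ k := by
  rw [kmS]
  apply Finset.prod_pos
  intro j hj
  rw [Finset.mem_range] at hj
  exact kmFactor_pos e δ (by omega)

lemma kmCard_pos {n : ℕ} (hn : 1 ≤ n) (e : Fin n → ℝ) :
    1 ≤ (Finset.univ.image e).card := by
  apply Finset.card_pos.mpr
  exact Finset.Nonempty.image ⟨⟨0, by omega⟩, Finset.mem_univ _⟩ e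

lemma kmD_last {n : ℕ} (hn : 1 ≤ n) (e : Fin n → ℝ) (δ : Fin n → ℝ)
    (hmax : ∀ i, (∀ j, e j ≤ e i) → δ i = 1) :
    kmD e δ (kmW e ((Finset.univ.image e).card - 1))
      = kmM e ((Finset.univ.image e).card - 1) := by
  have hm : 1 ≤ (Finset.univ.image e).card := kmCard_pos hn e
  have hm1 : (Finset.univ.image e).card - 1 < (Finset.univ.image e).card := by omega
  rw [kmD, kmM, Nat.cast_inj]
  congr 1
  ext i
  simp only [Finset.mem_filter, Finset.mem_univ, true_and, and_iff_left_iff_imp]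
  intro hi
  apply hmax
  intro j
  obtain ⟨l, hl, hw⟩ := kmW_surj e (Finset.mem_image_of_mem e (Finset.mem_univ j))
  rw [← hw, hi]
  exact (kmW_le_iff e hl hm1).mpr (by omega)

lemma kmS_zero {n : ℕ} (e : Fin n → ℝ) (δ : Fin n → ℝ) : kmS e δ 0 = 1 := by
  simp [kmS]

lemma kmS_succ {n : ℕ} (e : Fin n → ℝ) (δ : Fin n → ℝ) (k : ℕ) :
    kmS e δ (k+1) = kmS e δ k * (1 - kmD e δ (kmW e k) / kmY e (kmW e k)) := by
  rw [kmS, Finset.prod_range_succ, ← kmS]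

lemma kmS_top {n : ℕ} (hn : 1 ≤ n) (e : Fin n → ℝ) (δ : Fin n → ℝ)
    (hmax : ∀ i, (∀ j, e j ≤ e i) → δ i = 1) :
    kmS e δ (Finset.univ.image e).card = 0 := by
  have hm : 1 ≤ (Finset.univ.image e).card := kmCard_pos hn e
  have h : (Finset.univ.image e).card = ((Finset.univ.image e).card - 1) + 1 := by omega
  rw [h, kmS_succ]
  have hm1 : (Finset.univ.image e).card - 1 < (Finset.univ.image e).card := by omega
  have hY : kmY e (kmW e ((Finset.univ.image e).card - 1))
      = kmN e ((Finset.univ.image e).card - 1) := (kmN_eq_kmY e hm1).symm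
  have hN : kmN e ((Finset.univ.image e).card - 1)
      = kmM e ((Finset.univ.image e).card - 1) := by
    have := kmN_rec e hm1
    rw [show (Finset.univ.image e).card - 1 + 1 = (Finset.univ.image e).card by omega,
      kmN_last] at this
    linarith
  have hMne : kmM e ((Finset.univ.image e).card - 1) ≠ 0 := by
    have := kmM_one_le e hm1; linarith
  rw [hY, hN, kmD_last hn e δ hmax, div_self hMne]
  ring

lemma kmN_zero {n : ℕ} (e : Fin n → ℝ) : kmN e 0 = (n : ℝ) := by
  rw [kmN]
  have h : (Finset.univ.filter fun i : Fin n =>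
      ∃ l, 0 ≤ l ∧ l < (Finset.univ.image e).card ∧ e i = kmW e l) = Finset.univ := by
    apply Finset.filter_true_of_mem
    intro i _
    obtain ⟨l, hl, hw⟩ := kmW_surj e (Finset.mem_image_of_mem e (Finset.mem_univ i))
    exact ⟨l, Nat.zero_le _, hl, hw.symm⟩
  rw [h, Finset.card_univ, Fintype.card_fin]

/-- core per-value algebraic identity (uncensored case) -/
lemma kmCore (d y y' s s' a1 a2 a3 : ℝ) (hy : y ≠ 0) (hs : s ≠ 0) (hd : d ≠ 0)
    (hyd : y - d ≠ 0) (hrel : s' = s * (y - d) / y) :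
    d * ((a2 - a1) / (s - s')) + (y - y' - d) * ((a3 - a2) / s')
      = y * ((a3 - a1) / s) - y' * ((a3 - a2) / s') := by
  have hss : s - s' = s * d / y := by rw [hrel]; field_simp; ring
  have hs' : s' ≠ 0 := by rw [hrel]; exact div_ne_zero (mul_ne_zero hs hyd) hy
  rw [hss]
  field_simp
  rw [hrel]
  field_simp
  ring


/-- Rank-sum identity of Theorem 5: with `δ_i = 1` whenever `e_i` is the largest
observation, and for a continuous score `a : [0,1] → ℝ` with `A u = ∫_0^u a`, the
general-score imputed ranks
`δ_i·(A(F̂(e_i)) − A(F̂(e_i⁻)))/(F̂(e_i) − F̂(e_i⁻)) + (1−δ_i)·(A(1) − A(F̂(e_i)))/(1 − F̂(e_i))`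
sum to `n·(A(1) − A(0))`. -/
theorem generalScore_rank_sum (n : ℕ) (hn : 1 ≤ n) (e : Fin n → ℝ) (δ : Fin n → ℝ)
    (hδ : ∀ i, δ i = 0 ∨ δ i = 1)
    (hmax : ∀ i, (∀ j, e j ≤ e i) → δ i = 1)
    (a : ℝ → ℝ) (ha : ContinuousOn a (Set.Icc 0 1))
    (A : ℝ → ℝ) (hA : ∀ u, A u = ∫ s in (0 : ℝ)..u, a s) :
    ∑ i, (δ i * ((A (kmF e δ (e i)) - A (kmFminus e δ (e i)))
            / (kmF e δ (e i) - kmFminus e δ (e i)))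
        + (1 - δ i) * ((A 1 - A (kmF e δ (e i))) / (1 - kmF e δ (e i))))
      = n * (A 1 - A 0) := by
  classical
  have hm : 1 ≤ (Finset.univ.image e).card := kmCard_pos hn e
  set f : ℕ → ℝ := fun k => kmN e k * ((A 1 - A (1 - kmS e δ k)) / kmS e δ k) with hf
  have hmaps : ∀ i ∈ Finset.univ, e i ∈ Finset.univ.image e :=
    fun i _ => Finset.mem_image_of_mem e (Finset.mem_univ i)
  rw [← Finset.sum_fiberwise_of_maps_to hmaps]
  have himg : Finset.univ.image e
      = (Finset.range (Finset.univ.image e).card).image (kmW e) := by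
    ext u
    constructor
    · intro hu
      obtain ⟨k, hk, rfl⟩ := kmW_surj e hu
      exact Finset.mem_image.mpr ⟨k, Finset.mem_range.mpr hk, rfl⟩
    · intro hu
      obtain ⟨k, hk, rfl⟩ := Finset.mem_image.mp hu
      exact kmW_mem e (Finset.mem_range.mp hk)
  have hinj : ∀ x ∈ Finset.range (Finset.univ.image e).card,
      ∀ y ∈ Finset.range (Finset.univ.image e).card, kmW e x = kmW e y → x = y := by
    intro x hx y hy h
    exact kmW_inj e (Finset.mem_range.mp hx) (Finset.mem_range.mp hy) h
  rw [himg, Finset.sum_image hinj]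
  have hmain : ∀ k ∈ Finset.range (Finset.univ.image e).card,
      (∑ i ∈ Finset.univ.filter (fun i => e i = kmW e k),
        (δ i * ((A (kmF e δ (e i)) - A (kmFminus e δ (e i)))
            / (kmF e δ (e i) - kmFminus e δ (e i)))
        + (1 - δ i) * ((A 1 - A (kmF e δ (e i))) / (1 - kmF e δ (e i)))))
      = f k - f (k + 1) := by
    intro k hk0
    have hkm : k < (Finset.univ.image e).card := Finset.mem_range.mp hk0
    -- first: rewrite the fiber sum in terms of kmS
    have hδsum : ∑ i ∈ Finset.univ.filter (fun i => e i = kmW e k), δ i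
        = kmD e δ (kmW e k) := by
      rw [← Finset.sum_filter_add_sum_filter_not
        (Finset.univ.filter (fun i => e i = kmW e k)) (fun i => δ i = 1) δ]
      have e1 : ∑ i ∈ (Finset.univ.filter (fun i => e i = kmW e k)).filter
          (fun i => δ i = 1), δ i
          = (((Finset.univ.filter (fun i => e i = kmW e k)).filter
              (fun i => δ i = 1)).card : ℝ) := by
        rw [Finset.sum_congr rfl (fun i hi => (Finset.mem_filter.mp hi).2)]
        simp
      have e2 : ∑ i ∈ (Finset.univ.filter (fun i => e i = kmW e k)).filter
          (fun i => ¬ δ i = 1), δ i = 0 := by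
        apply Finset.sum_eq_zero
        intro i hi
        rcases hδ i with h | h
        · exact h
        · exact absurd h (Finset.mem_filter.mp hi).2
      rw [e1, e2, add_zero, kmD, Finset.filter_filter]
    have hMcard : ((Finset.univ.filter (fun i => e i = kmW e k)).card : ℝ)
        = kmM e k := by rw [kmM]
    have hδ'sum : ∑ i ∈ Finset.univ.filter (fun i => e i = kmW e k), (1 - δ i)
        = kmM e k - kmD e δ (kmW e k) := by
      rw [Finset.sum_sub_distrib, hδsum, Finset.sum_const, nsmul_eq_mul, mul_one, hMcard]
    have hsum : ∑ i ∈ Finset.univ.filter (fun i => e i = kmW e k),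
        (δ i * ((A (kmF e δ (e i)) - A (kmFminus e δ (e i)))
            / (kmF e δ (e i) - kmFminus e δ (e i)))
        + (1 - δ i) * ((A 1 - A (kmF e δ (e i))) / (1 - kmF e δ (e i))))
        = kmD e δ (kmW e k) * ((A (1 - kmS e δ (k+1)) - A (1 - kmS e δ k))
            / (kmS e δ k - kmS e δ (k+1)))
          + (kmM e k - kmD e δ (kmW e k)) * ((A 1 - A (1 - kmS e δ (k+1)))
            / kmS e δ (k+1)) := by
      have h1 : ∀ i ∈ Finset.univ.filter (fun i => e i = kmW e k),
          (δ i * ((A (kmF e δ (e i)) - A (kmFminus e δ (e i)))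
            / (kmF e δ (e i) - kmFminus e δ (e i)))
          + (1 - δ i) * ((A 1 - A (kmF e δ (e i))) / (1 - kmF e δ (e i))))
          = δ i * ((A (1 - kmS e δ (k+1)) - A (1 - kmS e δ k))
              / (kmS e δ k - kmS e δ (k+1)))
            + (1 - δ i) * ((A 1 - A (1 - kmS e δ (k+1))) / kmS e δ (k+1)) := by
        intro i hi
        have hei : e i = kmW e k := (Finset.mem_filter.mp hi).2
        rw [hei, kmF_eq e δ hkm, kmFminus_eq e δ hkm,
          show (1 - kmS e δ (k+1)) - (1 - kmS e δ k) = kmS e δ k - kmS e δ (k+1) by ring,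
          show (1:ℝ) - (1 - kmS e δ (k+1)) = kmS e δ (k+1) by ring]
      rw [Finset.sum_congr rfl h1, Finset.sum_add_distrib, ← Finset.sum_mul,
        ← Finset.sum_mul, hδsum, hδ'sum]
    rw [hsum]
    simp only [hf]
    -- now the algebraic identity
    have hspos : 0 < kmS e δ k := kmS_pos e δ hkm
    have hrec := kmN_rec e hkm
    by_cases hlast : k + 1 = (Finset.univ.image e).card
    · -- last value
      have hk1 : k = (Finset.univ.image e).card - 1 := by omega
      have hd : kmD e δ (kmW e k) = kmM e k := by
        rw [hk1]; exact kmD_last hn e δ hmax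
      have hy' : kmN e (k+1) = 0 := by rw [hlast]; exact kmN_last e
      have hs'0 : kmS e δ (k+1) = 0 := by rw [hlast]; exact kmS_top hn e δ hmax
      have hNM : kmN e k = kmM e k := by rw [hrec, hy', add_zero]
      rw [hs'0, hy', hd, hNM]
      simp only [sub_zero, sub_self, zero_mul, add_zero, zero_mul, sub_zero]
    · have hk1 : k + 1 < (Finset.univ.image e).card := by omega
      have hs'pos : 0 < kmS e δ (k+1) := kmS_pos e δ hk1
      have hy1 : 1 ≤ kmN e k := kmN_one_le e hkm
      have hs'eq : kmS e δ (k+1) = kmS e δ k * (kmN e k - kmD e δ (kmW e k)) / kmN e k := by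
        rw [kmS_succ, ← kmN_eq_kmY e hkm]
        field_simp
      by_cases hd0 : kmD e δ (kmW e k) = 0
      · have hss' : kmS e δ (k+1) = kmS e δ k := by
          rw [hs'eq, hd0, sub_zero, mul_div_assoc, div_self (by linarith), mul_one]
        rw [hd0, hss', show kmM e k = kmN e k - kmN e (k+1) from by linarith]
        ring
      · have hyd : kmN e k - kmD e δ (kmW e k) ≠ 0 := by
          have h1 := kmD_le_kmM e δ k
          have h2 := kmN_one_le e hk1
          have : (1:ℝ) ≤ kmN e k - kmD e δ (kmW e k) := by linarith
          linarith
        have hcore := kmCore (kmD e δ (kmW e k)) (kmN e k) (kmN e (k+1))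
          (kmS e δ k) (kmS e δ (k+1)) (A (1 - kmS e δ k)) (A (1 - kmS e δ (k+1))) (A 1)
          (by linarith) (ne_of_gt hspos) hd0 hyd hs'eq
        rw [show kmM e k - kmD e δ (kmW e k)
            = kmN e k - kmN e (k+1) - kmD e δ (kmW e k) from by linarith]
        exact hcore
  rw [Finset.sum_congr rfl hmain, Finset.sum_range_sub' f]
  rw [hf]
  simp only [kmN_zero, kmS_zero, kmN_last, zero_mul, sub_zero]
  norm_num
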